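/- Let r be a positive integer, H(X) an m×n matrix over F₂[X], and π : F₂[X] → F₂[X]/(X^r − 1) the canonical quotient homomorphism applied entrywise. Let d denote the minimum weight of a nonzero codeword of the quasi-cyclic code C_QC = {w ∈ (F₂[X]/(X^r − 1))^n : π(H)·wᵀ = 0}, where the weight of an element of F₂[X]/(X^r − 1) is the number of nonzero coefficients of its unique representative of degree less than r. Then every v(X) ∈ F₂[X]^n with H(X)·v(X)ᵀ = 0 whose entrywise reduction π(v) is nonzero satisfies wt(v) ≥ d, where wt(v) is the total number of nonzero coefficients over all entries of v. In particular, the free distance of the unwrapped convolutional code, restricted to codewords with nonzero wrap, is at least the minimum distance of the underlying quasi-cyclic code. -/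

import Mathlib

open Polynomial

lemma card_support_sum_le' {ι : Type*} (s : Finset ι) (f : ι → Polynomial (ZMod 2)) :
    (∑ k ∈ s, f k).support.card ≤ ∑ k ∈ s, (f k).support.card := by
  classical
  induction s using Finset.induction with
  | empty => simp
  | insert _ _ h ih =>
    rw [Finset.sum_insert h, Finset.sum_insert h]
    exact le_trans (Finset.card_le_card support_add)
      (le_trans (Finset.card_union_le _ _) (add_le_add_right ih _))

lemma fold_lemma {r : ℕ} (hr : 0 < r) (p : Polynomial (ZMod 2)) :
    p %ₘ (X ^ r - 1) = ∑ k ∈ p.support, monomial (k % r) (p.coeff k) := by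
  have hm : (X ^ r - 1 : Polynomial (ZMod 2)).Monic := monic_X_pow_sub_C 1 hr.ne'
  have hdeg : (X ^ r - 1 : Polynomial (ZMod 2)).degree = r := by
    simpa using degree_X_pow_sub_C hr (1 : ZMod 2)
  have hdvd : (X ^ r - 1 : Polynomial (ZMod 2)) ∣
      p - ∑ k ∈ p.support, monomial (k % r) (p.coeff k) := by
    have hsum : p - ∑ k ∈ p.support, monomial (k % r) (p.coeff k)
        = ∑ k ∈ p.support, (monomial k (p.coeff k) - monomial (k % r) (p.coeff k)) := by
      rw [Finset.sum_sub_distrib]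
      congr 1
      exact p.as_sum_support
    rw [hsum]
    refine Finset.dvd_sum fun k _ ↦ ?_
    have hmk : (monomial k (p.coeff k) : Polynomial (ZMod 2)) -
        monomial (k % r) (p.coeff k) =
        monomial (k % r) (p.coeff k) * ((X ^ r) ^ (k / r) - 1) := by
      rw [mul_sub, mul_one, ← pow_mul, monomial_mul_X_pow]
      congr 1
      rw [Nat.mod_add_div]
    rw [hmk]
    exact Dvd.dvd.mul_left
      (by simpa using sub_dvd_pow_sub_pow (X ^ r : Polynomial (ZMod 2)) 1 (k / r)) _
  rw [modByMonic_eq_of_dvd_sub hm hdvd]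
  rw [(modByMonic_eq_self_iff hm).2]
  rw [hdeg]
  refine lt_of_le_of_lt (degree_sum_le _ _) ?_
  rw [Finset.sup_lt_iff (by exact_mod_cast WithBot.bot_lt_coe r)]
  intro k _
  exact lt_of_le_of_lt (degree_monomial_le _ _) (by exact_mod_cast Nat.mod_lt k hr)

theorem free_distance_ge_min_distance
    {m n r : ℕ} (hr : 0 < r)
    (H : Matrix (Fin m) (Fin n) (Polynomial (ZMod 2))) (d : ℕ)
    (hd : IsLeast {k : ℕ | ∃ w : Fin n → Polynomial (ZMod 2),
        (∀ i, (w i).degree < (r : WithBot ℕ)) ∧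
        (∀ j, (Polynomial.X ^ r - 1) ∣ H.mulVec w j) ∧
        w ≠ 0 ∧ k = ∑ i, (w i).support.card} d)
    (v : Fin n → Polynomial (ZMod 2))
    (hv : H.mulVec v = 0)
    (hwrap : ∃ i, ¬ (Polynomial.X ^ r - 1) ∣ v i) :
    d ≤ ∑ i, (v i).support.card := by
  have hm : (X ^ r - 1 : Polynomial (ZMod 2)).Monic := monic_X_pow_sub_C 1 hr.ne'
  have hdeg : (X ^ r - 1 : Polynomial (ZMod 2)).degree = r := by
    simpa using degree_X_pow_sub_C hr (1 : ZMod 2)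
  set w : Fin n → Polynomial (ZMod 2) := fun i ↦ v i %ₘ (X ^ r - 1) with hw
  have hwdvd : ∀ i, (X ^ r - 1 : Polynomial (ZMod 2)) ∣ v i - w i := by
    intro i
    show (X ^ r - 1 : Polynomial (ZMod 2)) ∣ v i - v i %ₘ (X ^ r - 1)
    exact ⟨v i /ₘ (X ^ r - 1), by linear_combination -(modByMonic_add_div (v i) (X ^ r - 1))⟩
  have hmem : (∑ i, (w i).support.card) ∈ {k : ℕ | ∃ w : Fin n → Polynomial (ZMod 2),
        (∀ i, (w i).degree < (r : WithBot ℕ)) ∧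
        (∀ j, (Polynomial.X ^ r - 1) ∣ H.mulVec w j) ∧
        w ≠ 0 ∧ k = ∑ i, (w i).support.card} := by
    refine ⟨w, fun i ↦ hdeg ▸ degree_modByMonic_lt _ hm, fun j ↦ ?_, ?_, rfl⟩
    · have h0 : H.mulVec v j = 0 := congrFun hv j
      have heq : H.mulVec w j = H.mulVec w j - H.mulVec v j := by rw [h0, sub_zero]
      rw [heq]
      simp only [Matrix.mulVec, dotProduct, ← Finset.sum_sub_distrib]
      refine Finset.dvd_sum fun i _ ↦ ?_
      rw [← mul_sub]
      exact Dvd.dvd.mul_left ((dvd_sub_comm).mp (hwdvd i)) _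
    · obtain ⟨i, hi⟩ := hwrap
      intro hcon
      apply hi
      have hz : w i = 0 := congrFun hcon i
      exact (modByMonic_eq_zero_iff_dvd hm).1 hz
  have hle := hd.2 hmem
  refine hle.trans (Finset.sum_le_sum fun i _ ↦ ?_)
  show (v i %ₘ (X ^ r - 1)).support.card ≤ (v i).support.card
  rw [fold_lemma hr]
  refine le_trans (card_support_sum_le' _ _) ?_
  calc ∑ k ∈ (v i).support, (monomial (k % r) ((v i).coeff k)).support.card
      ≤ ∑ k ∈ (v i).support, 1 :=
        Finset.sum_le_sum fun k _ ↦ by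
          simpa using Finset.card_le_card (support_monomial' _ _)
    _ = (v i).support.card := by simp
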